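/- Let f be an irreducible Weierstrass polynomial with Puiseux characteristic (b₀,...,b_g) and fix a Newton–Puiseux root γ of f. For j ∈ {1,...,g}, the number of Newton–Puiseux roots γ_i of f with contact order O(γ_i, γ) = b_j/b₀ is exactly l_{j-1} - l_j, and the number with O(γ_i,γ) ≥ b_{j}/b₀ (including γ itself) is l_{j-1}. -/

import Mathlib

noncomputable section

open Polynomial

/-- The substitution `x^{1/n} ↦ ε·x^{1/n}` on fractional power series: it sends
`Σ a_{i} x^{i/n}` to `Σ a_{i} ε^{i} x^{i/n}` (here the exponent of `ε` at `x^q`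
is the integer `q·n`). -/
def twist (n : ℕ) (ε : ℂ) (γ : HahnSeries ℚ ℂ) : HahnSeries ℚ ℂ where
  coeff q := ε ^ (q * n : ℚ).num * γ.coeff q
  isPWO_support' := γ.isPWO_support.mono (by
    intro q hq
    simp only [Function.mem_support] at hq ⊢
    intro h
    simp [h] at hq)

open scoped Classical

lemma aux_card_dvd (e c : ℕ) (he : 0 < e) :
    ((Finset.range (e * c)).filter (fun j => e ∣ j)).card = c := by
  have : (Finset.range (e * c)).filter (fun j => e ∣ j)
      = (Finset.range c).image (fun t => e * t) := by
    ext j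
    simp only [Finset.mem_filter, Finset.mem_range, Finset.mem_image]
    constructor
    · rintro ⟨hj, t, rfl⟩
      exact ⟨t, lt_of_mul_lt_mul_left hj (Nat.zero_le e), rfl⟩
    · rintro ⟨t, ht, rfl⟩
      exact ⟨(Nat.mul_lt_mul_left he).2 ht, t, rfl⟩
  rw [this, Finset.card_image_of_injective _ fun a b h => Nat.eq_of_mul_eq_mul_left he h,
    Finset.card_range]


/-- Let `f` be an irreducible Weierstrass polynomial of degree `n = b₀` with Puiseux
characteristic `(b₀,...,b_g)` and fix a Newton–Puiseux root `γ` of `f`; the roots of `f`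
are the twists `γ_j` of `γ` by the powers `ω^j` (`0 ≤ j < n`) of a primitive `n`-th root
of unity `ω`.  For `1 ≤ m ≤ g`, exactly `l_{m-1} - l_m` of the roots `γ_j` have contact
order `O(γ_j, γ) = b_m/b₀` with `γ`, and exactly `l_{m-1}` of them (including `γ` itself)
have `O(γ_j, γ) ≥ b_m/b₀`. -/
theorem count_roots_with_given_contact (n g : ℕ) (hn : 0 < n) (hg : 1 ≤ g)
    (f : Polynomial (PowerSeries ℂ)) (hmonic : f.Monic) (hdeg : f.natDegree = n)
    (hW : ∀ j, j < n → PowerSeries.constantCoeff (f.coeff j) = 0)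
    (hirr : Irreducible f)
    (γ : HahnSeries ℚ ℂ)
    (hγsupp : γ.support ⊆ {q : ℚ | ∃ i : ℕ, 1 ≤ i ∧ q = (i : ℚ) / n})
    (hγ : Polynomial.eval₂ (HahnSeries.ofPowerSeries ℚ ℂ) γ f = 0)
    (ω : ℂ) (hω : IsPrimitiveRoot ω n)
    (b l : ℕ → ℕ)
    (hb0 : b 0 = n) (hl0 : l 0 = n)
    (hl : ∀ m, m < g → l (m + 1) = Nat.gcd (l m) (b (m + 1)))
    (hlg : l g = 1)
    (hchar : ∀ m, m < g →
      ({i : ℕ | γ.coeff ((i : ℚ) / n) ≠ 0 ∧ ¬ l m ∣ i}.Nonempty ∧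
       b (m + 1) = sInf {i : ℕ | γ.coeff ((i : ℚ) / n) ≠ 0 ∧ ¬ l m ∣ i}))
    (m : ℕ) (hm1 : 1 ≤ m) (hmg : m ≤ g) :
    ((Finset.range n).filter (fun j =>
        (∀ q : ℚ, q < (b m : ℚ) / n → (twist n (ω ^ j) γ).coeff q = γ.coeff q) ∧
        (twist n (ω ^ j) γ).coeff ((b m : ℚ) / n) ≠ γ.coeff ((b m : ℚ) / n))).card
      = l (m - 1) - l m ∧
    ((Finset.range n).filter (fun j =>
        ∀ q : ℚ, q < (b m : ℚ) / n → (twist n (ω ^ j) γ).coeff q = γ.coeff q)).card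
      = l (m - 1) := by
  have hn' : (n : ℚ) ≠ 0 := Nat.cast_ne_zero.2 hn.ne'
  have hnQ : (0:ℚ) < n := by exact_mod_cast hn
  -- l is a chain of divisors of n
  have ldvd : ∀ k, k ≤ g → l k ∣ n := by
    intro k
    induction k with
    | zero => intro _; rw [hl0]
    | succ k ih =>
      intro hk
      rw [hl k (by omega)]
      exact (Nat.gcd_dvd_left _ _).trans (ih (by omega))
  have lpos : ∀ k, k ≤ g → 0 < l k := by
    intro k hk
    rcases Nat.eq_zero_or_pos (l k) with h | h
    · exact absurd (ldvd k hk) (by rw [h]; simpa using hn.ne')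
    · exact h
  have ldvd_succ : ∀ k, k < g → l (k + 1) ∣ l k := by
    intro k hk; rw [hl k hk]; exact Nat.gcd_dvd_left _ _
  have ldvd_chain : ∀ k k', k ≤ k' → k' ≤ g → l k' ∣ l k := by
    intro k k' hkk'
    induction k' with
    | zero => intro _; rw [Nat.le_zero.mp hkk']
    | succ k' ih =>
      intro hk'
      rcases Nat.lt_or_ge k (k' + 1) with h | h
      · exact (ldvd_succ k' (by omega)).trans (ih (by omega) (by omega))
      · rw [Nat.le_antisymm hkk' h]
  -- membership facts for the b k, 1 ≤ k ≤ g
  have hbmem : ∀ k, 1 ≤ k → k ≤ g →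
      γ.coeff ((b k : ℚ) / n) ≠ 0 ∧ ¬ l (k - 1) ∣ b k := by
    intro k hk1 hkg
    obtain ⟨hne, hsinf⟩ := hchar (k - 1) (by omega)
    have hk : k - 1 + 1 = k := by omega
    rw [hk] at hsinf
    have := Nat.sInf_mem hne
    rw [← hsinf] at this
    exact this
  have hldvdb : ∀ k, 1 ≤ k → k ≤ g → l k ∣ b k := by
    intro k hk1 hkg
    have hk : k - 1 + 1 = k := by omega
    have := hl (k - 1) (by omega)
    rw [hk] at this
    rw [this]
    exact Nat.gcd_dvd_right _ _
  -- minimality: coefficients below b k are divisible by l (k-1)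
  have hmin : ∀ k, 1 ≤ k → k ≤ g → ∀ i : ℕ, γ.coeff ((i : ℚ) / n) ≠ 0 → i < b k →
      l (k - 1) ∣ i := by
    intro k hk1 hkg i hc hi
    by_contra h
    obtain ⟨hne, hsinf⟩ := hchar (k - 1) (by omega)
    have hk : k - 1 + 1 = k := by omega
    rw [hk] at hsinf
    have : b k ≤ i := hsinf ▸ Nat.sInf_le ⟨hc, h⟩
    omega
  -- strict monotonicity of b on [1, g]
  have hmono_step : ∀ k, 1 ≤ k → k < g → b k < b (k + 1) := by
    intro k hk1 hkg
    have hmem := hbmem (k + 1) (by omega) (by omega)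
    simp only [Nat.add_sub_cancel] at hmem
    by_contra h
    push_neg at h
    rcases Nat.lt_or_ge (b (k + 1)) (b k) with hlt | hge
    · have hdk : l (k - 1) ∣ b (k + 1) := hmin k hk1 (by omega) _ hmem.1 hlt
      exact hmem.2 ((ldvd_chain (k - 1) k (by omega) (by omega)).trans hdk)
    · have : b (k + 1) = b k := le_antisymm h hge
      exact hmem.2 (this ▸ hldvdb k hk1 (by omega))
  have hmono : ∀ k k', 1 ≤ k → k < k' → k' ≤ g → b k < b k' := by
    intro k k' hk1 hkk'
    induction k' with
    | zero => omega
    | succ k' ih =>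
      intro hk'g
      rcases Nat.lt_or_ge k k' with h | h
      · exact (ih h (by omega)).trans (hmono_step k' (by omega) (by omega))
      · have : k = k' := by omega
        subst this
        exact hmono_step k hk1 (by omega)
  -- abbreviations
  set d := l (m - 1) with hd
  have hddvd : d ∣ n := ldvd (m - 1) (by omega)
  have hdpos : 0 < d := lpos (m - 1) (by omega)
  set e := n / d with he
  have hed : e * d = n := Nat.div_mul_cancel hddvd
  have hepos : 0 < e := by
    rcases Nat.eq_zero_or_pos e with h | h
    · rw [h, zero_mul] at hed; omega
    · exact h
  have hlm : l m = Nat.gcd d (b m) := by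
    have hk : m - 1 + 1 = m := by omega
    have := hl (m - 1) (by omega)
    rw [hk] at this
    exact this
  have hlmd : l m ∣ d := hlm ▸ Nat.gcd_dvd_left _ _
  have hlmb : l m ∣ b m := hlm ▸ Nat.gcd_dvd_right _ _
  have hlmpos : 0 < l m := lpos m hmg
  have hlmn : l m ∣ n := hlmd.trans hddvd
  -- coefficient of twist at i/n
  have hnum : ∀ i : ℕ, (((i : ℚ) / n * n)).num = i := by
    intro i
    rw [div_mul_cancel₀ _ hn']
    exact Rat.num_natCast i
  have htw : ∀ (ε : ℂ) (i : ℕ),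
      (twist n ε γ).coeff ((i : ℚ) / n) = ε ^ i * γ.coeff ((i : ℚ) / n) := by
    intro ε i
    show ε ^ (((i : ℚ) / n * n)).num * _ = _
    rw [hnum, zpow_natCast]
  have hbm_coeff : γ.coeff ((b m : ℚ) / n) ≠ 0 := (hbmem m hm1 hmg).1
  -- the key equivalence for the "all coefficients agree below b m" condition
  have inner : ∀ j : ℕ,
      (∀ q : ℚ, q < (b m : ℚ) / n → (twist n (ω ^ j) γ).coeff q = γ.coeff q) ↔ e ∣ j := by
    intro j
    constructor
    · intro P
      have key : ∀ i : ℕ, γ.coeff ((i : ℚ) / n) ≠ 0 → i < b m → n ∣ j * i := by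
        intro i hc hi
        have hq : ((i : ℚ) / n) < (b m : ℚ) / n :=
          (div_lt_div_iff_of_pos_right hnQ).2 (by exact_mod_cast hi)
        have := P _ hq
        rw [htw] at this
        have h1 : (ω ^ j) ^ i = 1 := by
          have := mul_right_cancel₀ hc (this.trans (one_mul _).symm)
          exact this
        rw [← pow_mul] at h1
        exact (hω.pow_eq_one_iff_dvd _).1 h1
      have keyl : ∀ k, k ≤ m - 1 → n ∣ j * l k := by
        intro k
        induction k with
        | zero => intro _; rw [hl0]; exact dvd_mul_left n j
        | succ k ih =>
          intro hk
          have hkg : k < g := by omega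
          rw [hl k hkg, ← Nat.gcd_mul_left]
          refine Nat.dvd_gcd (ih (by omega)) ?_
          refine key _ (hbmem (k+1) (by omega) (by omega)).1 ?_
          exact hmono (k + 1) m (by omega) (by omega) hmg
      have hjd : n ∣ j * d := keyl (m - 1) le_rfl
      -- from n ∣ j * d and e * d = n conclude e ∣ j
      have : e * d ∣ j * d := by rw [hed]; exact hjd
      exact (Nat.mul_dvd_mul_iff_right hdpos).1 this
    · intro hj q hq
      by_cases hc : γ.coeff q = 0
      · show _ * _ = _
        rw [hc, mul_zero]
      · obtain ⟨i, hi1, rfl⟩ := hγsupp hc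
        have hib : i < b m := by
          have := (div_lt_div_iff_of_pos_right hnQ).1 hq
          exact_mod_cast this
        have hdi : d ∣ i := hmin m hm1 hmg i hc hib
        have hnji : n ∣ j * i := by
          obtain ⟨t, rfl⟩ := hj
          obtain ⟨s, rfl⟩ := hdi
          rw [← hed]
          exact ⟨t * s, by ring⟩
        rw [htw, ← pow_mul, (hω.pow_eq_one_iff_dvd _).2 hnji, one_mul]
  -- the second condition: disagreement at b m / n
  have houter : ∀ j : ℕ,
      ((twist n (ω ^ j) γ).coeff ((b m : ℚ) / n) ≠ γ.coeff ((b m : ℚ) / n)) ↔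
        ¬ n ∣ j * b m := by
    intro j
    rw [htw, ← pow_mul]
    constructor
    · intro h hdvd
      exact h (by rw [(hω.pow_eq_one_iff_dvd _).2 hdvd, one_mul])
    · intro h heq
      have h1 : ω ^ (j * b m) = 1 := mul_right_cancel₀ hbm_coeff (heq.trans (one_mul _).symm)
      exact h ((hω.pow_eq_one_iff_dvd _).1 h1)
  -- combining: e ∣ j ∧ n ∣ j * b m ↔ (n / l m) ∣ j
  have hsplit : ∀ j : ℕ, (e ∣ j ∧ n ∣ j * b m) ↔ (n / l m) ∣ j := by
    intro j
    have hnlm : n / l m = e * (d / l m) := by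
      rw [← hed, Nat.mul_div_assoc e hlmd]
    constructor
    · rintro ⟨⟨t, rfl⟩, hnb⟩
      rw [← hed] at hnb
      have hdtb : d ∣ t * b m := by
        have : e * d ∣ e * (t * b m) := by
          have : e * t * b m = e * (t * b m) := by ring
          rwa [this] at hnb
        exact (Nat.mul_dvd_mul_iff_left hepos).1 this
      have hdtlm : d ∣ t * l m := by
        rw [hlm, ← Nat.gcd_mul_left]
        exact Nat.dvd_gcd (dvd_mul_left d t) hdtb
      have hdt : d / l m ∣ t := by
        obtain ⟨s, hs⟩ := hdtlm
        have : (d / l m) * l m ∣ t * l m := by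
          rw [Nat.div_mul_cancel hlmd]
          exact ⟨s, hs⟩
        exact (Nat.mul_dvd_mul_iff_right hlmpos).1 this
      rw [hnlm]
      exact Nat.mul_dvd_mul_left e hdt
    · rintro ⟨t, rfl⟩
      constructor
      · rw [hnlm]; exact ⟨(d / l m) * t, by ring⟩
      · obtain ⟨s, hs⟩ := hlmb
        refine ⟨t * s, ?_⟩
        calc n / l m * t * b m = n / l m * l m * (t * s) := by rw [hs]; ring
          _ = n * (t * s) := by rw [Nat.div_mul_cancel hlmn]
  -- now count
  have hcard2 : ((Finset.range n).filter (fun j =>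
      ∀ q : ℚ, q < (b m : ℚ) / n → (twist n (ω ^ j) γ).coeff q = γ.coeff q)).card = d := by
    rw [Finset.filter_congr (fun j _ => inner j)]
    have := aux_card_dvd e d hepos
    rw [hed] at this
    convert this using 2
  have hcard_sub : ((Finset.range n).filter (fun j => (n / l m) ∣ j)).card = l m := by
    have h1 : (n / l m) * l m = n := Nat.div_mul_cancel hlmn
    have hpos : 0 < n / l m := by
      rcases Nat.eq_zero_or_pos (n / l m) with h | h
      · rw [h, zero_mul] at h1; omega
      · exact h
    have := aux_card_dvd (n / l m) (l m) hpos
    rw [h1] at this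
    convert this using 2
  constructor
  · -- first count
    have hfe : (Finset.range n).filter (fun j =>
        (∀ q : ℚ, q < (b m : ℚ) / n → (twist n (ω ^ j) γ).coeff q = γ.coeff q) ∧
        (twist n (ω ^ j) γ).coeff ((b m : ℚ) / n) ≠ γ.coeff ((b m : ℚ) / n))
        = ((Finset.range n).filter (fun j =>
            ∀ q : ℚ, q < (b m : ℚ) / n → (twist n (ω ^ j) γ).coeff q = γ.coeff q)) \
          ((Finset.range n).filter (fun j => (n / l m) ∣ j)) := by
      ext j
      simp only [Finset.mem_filter, Finset.mem_sdiff, Finset.mem_range]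
      constructor
      · rintro ⟨hj, hP, hN⟩
        refine ⟨⟨hj, hP⟩, ?_⟩
        rintro ⟨-, hdvd⟩
        exact ((houter j).1 hN) ((hsplit j).2 hdvd).2
      · rintro ⟨⟨hj, hP⟩, hnd⟩
        refine ⟨hj, hP, (houter j).2 ?_⟩
        intro hnb
        exact hnd ⟨hj, (hsplit j).1 ⟨(inner j).1 hP, hnb⟩⟩
    rw [hfe, Finset.card_sdiff_of_subset, hcard2, hcard_sub]
    · intro j hj
      simp only [Finset.mem_filter, Finset.mem_range] at hj ⊢
      exact ⟨hj.1, (inner j).2 ((hsplit j).2 hj.2).1⟩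
  · exact hcard2
end
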